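/- If f has a pole of order n ≥ 1 at w, then for all but countably many k ∈ ℂ, the function z ↦ f(z)e^{ik(z−w)} has residue at w not equal to zero. In fact, the residue of f(z)e^{ik(z−w)} at w is a polynomial in k of degree n−1 with leading coefficient a_{−n}(ik)^{n−1}/(n−1)! where a_{−n} ≠ 0 is the leading Laurent coefficient, hence it is nonzero for all but at most n−1 values of k. -/

import Mathlib

open Complex Metric Filter

lemma aux_iter_analytic {g : ℂ → ℂ} {U : Set ℂ} (hU : IsOpen U)
    (hg : DifferentiableOn ℂ g U) (j : ℕ) : AnalyticOnNhd ℂ (iteratedDeriv j g) U := by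
  induction j with
  | zero => simpa [iteratedDeriv_zero] using hg.analyticOnNhd hU
  | succ j ih => rw [iteratedDeriv_succ]; exact ih.deriv

lemma aux_key (j : ℕ) (F : ℕ → ℂ) (b E : ℂ) :
    ∑ m ∈ Finset.range (j + 1),
      ((j.choose m : ℂ) * b ^ m) * (F (j - m + 1) * E + F (j - m) * (E * b))
    = ∑ m ∈ Finset.range (j + 1 + 1), ((j + 1).choose m : ℂ) * F (j + 1 - m) * b ^ m * E := by
  have h1 : ∀ m ∈ Finset.range (j + 1),
      ((j.choose m : ℂ) * b ^ m) * (F (j - m + 1) * E + F (j - m) * (E * b))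
      = (j.choose m : ℂ) * F (j + 1 - m) * b ^ m * E
        + (j.choose m : ℂ) * F (j - m) * b ^ (m + 1) * E := by
    intro m hm
    have hm' := Finset.mem_range.1 hm
    have h : j - m + 1 = j + 1 - m := by omega
    rw [h]; ring
  rw [Finset.sum_congr rfl h1, Finset.sum_add_distrib]
  rw [Finset.sum_range_succ' (fun m => (((j + 1).choose m : ℕ) : ℂ) * F (j + 1 - m) * b ^ m * E)]
  have h2 : ∀ m ∈ Finset.range (j + 1),
      (((j + 1).choose (m + 1) : ℕ) : ℂ) * F (j + 1 - (m + 1)) * b ^ (m + 1) * E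
      = (j.choose m : ℂ) * F (j - m) * b ^ (m + 1) * E
        + (j.choose (m + 1) : ℂ) * F (j - m) * b ^ (m + 1) * E := by
    intro m hm
    rw [Nat.choose_succ_succ, Nat.succ_sub_succ]
    push_cast; ring
  rw [Finset.sum_congr rfl h2, Finset.sum_add_distrib]
  have h3 : ∑ m ∈ Finset.range (j + 1), (j.choose (m + 1) : ℂ) * F (j - m) * b ^ (m + 1) * E
        + (((j + 1).choose 0 : ℕ) : ℂ) * F (j + 1 - 0) * b ^ 0 * E
      = ∑ m ∈ Finset.range (j + 1), (j.choose m : ℂ) * F (j + 1 - m) * b ^ m * E := by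
    have := (Finset.sum_range_succ'
      (fun m => ((j.choose m : ℕ) : ℂ) * F (j + 1 - m) * b ^ m * E) (j + 1)).symm
    simp only [Nat.succ_sub_succ, Nat.choose_zero_right] at this ⊢
    rw [this, Finset.sum_range_succ]
    simp
  rw [add_assoc, h3]; ring

lemma aux_leibniz {g : ℂ → ℂ} {U : Set ℂ} (hU : IsOpen U) (hg : DifferentiableOn ℂ g U)
    (w k : ℂ) (j : ℕ) : ∀ z ∈ U,
    iteratedDeriv j (fun z => g z * Complex.exp (Complex.I * k * (z - w))) z
      = ∑ m ∈ Finset.range (j + 1),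
          (j.choose m : ℂ) * iteratedDeriv (j - m) g z * (Complex.I * k) ^ m *
            Complex.exp (Complex.I * k * (z - w)) := by
  induction j with
  | zero => intro z hz; simp
  | succ j ih =>
    intro z hz
    rw [iteratedDeriv_succ]
    have hEq : deriv (iteratedDeriv j (fun z => g z * Complex.exp (Complex.I * k * (z - w)))) z
        = deriv (fun z => ∑ m ∈ Finset.range (j + 1),
            (j.choose m : ℂ) * iteratedDeriv (j - m) g z * (Complex.I * k) ^ m *
              Complex.exp (Complex.I * k * (z - w))) z :=
      Filter.EventuallyEq.deriv_eq (Filter.eventuallyEq_of_mem (hU.mem_nhds hz) ih)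
    rw [hEq]
    have hE : HasDerivAt (fun z => Complex.exp (Complex.I * k * (z - w)))
        (Complex.exp (Complex.I * k * (z - w)) * (Complex.I * k)) z := by
      have h1 : HasDerivAt (fun z : ℂ => Complex.I * k * (z - w)) (Complex.I * k) z := by
        simpa using ((hasDerivAt_id z).sub_const w).const_mul (Complex.I * k)
      exact h1.cexp
    have hsum : HasDerivAt (fun z => ∑ m ∈ Finset.range (j + 1),
          (j.choose m : ℂ) * iteratedDeriv (j - m) g z * (Complex.I * k) ^ m *
            Complex.exp (Complex.I * k * (z - w)))
        (∑ m ∈ Finset.range (j + 1),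
          ((j.choose m : ℂ) * (Complex.I * k) ^ m) *
            (iteratedDeriv (j - m + 1) g z * Complex.exp (Complex.I * k * (z - w))
              + iteratedDeriv (j - m) g z *
                (Complex.exp (Complex.I * k * (z - w)) * (Complex.I * k)))) z := by
      apply HasDerivAt.fun_sum
      intro m _
      have hg' : HasDerivAt (iteratedDeriv (j - m) g) (iteratedDeriv (j - m + 1) g z) z := by
        have h := (aux_iter_analytic hU hg (j - m) z hz).differentiableAt.hasDerivAt
        rwa [← iteratedDeriv_succ] at h
      have h2 : (fun z => (j.choose m : ℂ) * iteratedDeriv (j - m) g z * (Complex.I * k) ^ m *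
            Complex.exp (Complex.I * k * (z - w)))
          = fun z => ((j.choose m : ℂ) * (Complex.I * k) ^ m) *
              (iteratedDeriv (j - m) g z * Complex.exp (Complex.I * k * (z - w))) := by
        funext z; ring
      rw [h2]
      exact (hg'.mul hE).const_mul _
    rw [hsum.deriv]
    exact aux_key j (fun i => iteratedDeriv i g z) (Complex.I * k)
      (Complex.exp (Complex.I * k * (z - w)))

lemma aux_residue {f g : ℂ → ℂ} {U : Set ℂ} {w : ℂ} {n : ℕ} (hn : 1 ≤ n)
    (hU : IsOpen U) (hwU : w ∈ U) (hg : DifferentiableOn ℂ g U)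
    (hfg : ∀ z ∈ U \ {w}, f z = g z / (z - w) ^ n) (k : ℂ) {r ε : ℝ}
    (hr : closedBall w r ⊆ U) (hε : ε ∈ Set.Ioo 0 r) :
    (2 * Real.pi * Complex.I)⁻¹ *
        (∮ z in C(w, ε), f z * Complex.exp (Complex.I * k * (z - w)))
      = ∑ m ∈ Finset.range n,
          (iteratedDeriv (n - 1 - m) g w / (Nat.factorial (n - 1 - m))) *
            (Complex.I * k) ^ m / (Nat.factorial m) := by
  set h : ℂ → ℂ := fun z => g z * Complex.exp (Complex.I * k * (z - w)) with hh
  have hballU : closedBall w ε ⊆ U := (closedBall_subset_closedBall hε.2.le).trans hr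
  have hcoe : (ε.toNNReal : ℝ) = ε := Real.coe_toNNReal ε hε.1.le
  have hdh : DifferentiableOn ℂ h (closedBall w (ε.toNNReal : ℝ)) := by
    rw [hcoe]
    exact (hg.mono hballU).mul
      ((((differentiable_id.sub_const w).const_mul (Complex.I * k)).cexp).differentiableOn)
  have h0 : 0 < ε.toNNReal := Real.toNNReal_pos.2 hε.1
  have hpow : HasFPowerSeriesOnBall h (cauchyPowerSeries h w ε.toNNReal) w ε.toNNReal :=
    hdh.hasFPowerSeriesOnBall h0
  have key := hpow.factorial_smul 1 (n - 1)
  have capply := cauchyPowerSeries_apply h w (ε.toNNReal : ℝ) (n - 1) 1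
  have hint : (∮ z in C(w, ε), f z * Complex.exp (Complex.I * k * (z - w)))
      = ∮ z in C(w, ε), (1 / (z - w)) ^ (n - 1) • ((z - w)⁻¹ • h z) := by
    apply circleIntegral.integral_congr hε.1.le
    intro z hz
    have hdist : dist z w = ε := mem_sphere.1 hz
    have hne : z ≠ w := by
      intro hzw; rw [hzw, dist_self] at hdist; exact absurd hdist.symm (ne_of_gt hε.1)
    have hzU : z ∈ U := hballU (sphere_subset_closedBall hz)
    have hzw0 : z - w ≠ 0 := sub_ne_zero.2 hne
    have hp : (z - w) ^ n = (z - w) ^ (n - 1) * (z - w) := by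
      rw [← pow_succ, Nat.sub_add_cancel hn]
    show f z * Complex.exp (Complex.I * k * (z - w))
      = (1 / (z - w)) ^ (n - 1) • ((z - w)⁻¹ • h z)
    rw [hfg z ⟨hzU, hne⟩]
    simp only [smul_eq_mul, one_div, hh]
    rw [hp]
    field_simp
    rw [one_div, inv_pow, mul_assoc, mul_inv_cancel₀ (pow_ne_zero _ hzw0), mul_one]
  have step1 : (2 * Real.pi * Complex.I : ℂ)⁻¹ *
      (∮ z in C(w, ε), f z * Complex.exp (Complex.I * k * (z - w)))
      = iteratedDeriv (n - 1) h w / ((n - 1).factorial : ℂ) := by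
    rw [hint]
    have hfd : iteratedFDeriv ℂ (n - 1) h w (fun _ => 1) = iteratedDeriv (n - 1) h w := rfl
    rw [hfd, nsmul_eq_mul] at key
    have hc2 : (cauchyPowerSeries h w (ε.toNNReal : ℝ) (n - 1)) (fun _ => 1)
        = (2 * Real.pi * Complex.I : ℂ)⁻¹ *
          (∮ z in C(w, ε), (1 / (z - w)) ^ (n - 1) • ((z - w)⁻¹ • h z)) := by
      rw [capply, hcoe]
      simp [smul_eq_mul]
    rw [hc2] at key
    rw [eq_div_iff (by exact_mod_cast (n - 1).factorial_ne_zero)]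
    rw [mul_comm] at key
    exact key
  rw [step1]
  have hlb := aux_leibniz hU hg w k (n - 1) w hwU
  rw [Nat.sub_add_cancel hn] at hlb
  simp only [sub_self, mul_zero, Complex.exp_zero, mul_one] at hlb
  rw [← hh] at hlb
  rw [hlb, Finset.sum_div]
  apply Finset.sum_congr rfl
  intro m hm
  have hm' : m ≤ n - 1 := by have := Finset.mem_range.1 hm; omega
  have hcf : ((n - 1).choose m * m.factorial * (n - 1 - m).factorial : ℂ)
      = ((n - 1).factorial : ℂ) := by
    exact_mod_cast congrArg (Nat.cast : ℕ → ℂ)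
      (Nat.choose_mul_factorial_mul_factorial hm')
  have hfm : (m.factorial : ℂ) ≠ 0 := by exact_mod_cast m.factorial_ne_zero
  have hfnm : ((n - 1 - m).factorial : ℂ) ≠ 0 := by exact_mod_cast (n - 1 - m).factorial_ne_zero
  have hfn : ((n - 1).factorial : ℂ) ≠ 0 := by exact_mod_cast (n - 1).factorial_ne_zero
  field_simp
  linear_combination iteratedDeriv (n - 1 - m) g w * (Complex.I * k) ^ m * hcf

theorem stmt_11 (f g : ℂ → ℂ) (U : Set ℂ) (w : ℂ) (n : ℕ) (hn : 1 ≤ n)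
    (hU : IsOpen U) (hwU : w ∈ U)
    (hg : DifferentiableOn ℂ g U) (hgw : g w ≠ 0)
    (hfg : ∀ z ∈ U \ {w}, f z = g z / (z - w) ^ n) :
    (∀ k : ℂ, ∀ᶠ ε in nhdsWithin (0 : ℝ) (Set.Ioi 0),
        (2 * Real.pi * Complex.I)⁻¹ *
            (∮ z in C(w, ε), f z * Complex.exp (Complex.I * k * (z - w)))
          = ∑ m ∈ Finset.range n,
              (iteratedDeriv (n - 1 - m) g w / (Nat.factorial (n - 1 - m))) *
                (Complex.I * k) ^ m / (Nat.factorial m)) ∧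
    g w * Complex.I ^ (n - 1) / (Nat.factorial (n - 1)) ≠ 0 ∧
    {k : ℂ | ∑ m ∈ Finset.range n,
        (iteratedDeriv (n - 1 - m) g w / (Nat.factorial (n - 1 - m))) *
          (Complex.I * k) ^ m / (Nat.factorial m) = 0}.Finite ∧
    Set.ncard {k : ℂ | ∑ m ∈ Finset.range n,
        (iteratedDeriv (n - 1 - m) g w / (Nat.factorial (n - 1 - m))) *
          (Complex.I * k) ^ m / (Nat.factorial m) = 0} ≤ n - 1 := by
  obtain ⟨r, hr0, hrU⟩ : ∃ r > 0, closedBall w r ⊆ U := by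
    rcases Metric.isOpen_iff.1 hU w hwU with ⟨R, hR0, hRU⟩
    exact ⟨R / 2, by positivity, (closedBall_subset_ball (by linarith)).trans hRU⟩
  have hlead : g w * Complex.I ^ (n - 1) / ((Nat.factorial (n - 1) : ℕ) : ℂ) ≠ 0 :=
    div_ne_zero (mul_ne_zero hgw (pow_ne_zero _ Complex.I_ne_zero))
      (by exact_mod_cast (n - 1).factorial_ne_zero)
  set P : Polynomial ℂ := ∑ m ∈ Finset.range n, Polynomial.C
      (iteratedDeriv (n - 1 - m) g w / ((n - 1 - m).factorial : ℂ) * Complex.I ^ m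
        / (m.factorial : ℂ)) * Polynomial.X ^ m with hP
  have hsum : ∀ k : ℂ, (∑ m ∈ Finset.range n,
      (iteratedDeriv (n - 1 - m) g w / (Nat.factorial (n - 1 - m))) *
        (Complex.I * k) ^ m / (Nat.factorial m)) = P.eval k := by
    intro k
    rw [hP, Polynomial.eval_finset_sum]
    apply Finset.sum_congr rfl
    intro m _
    rw [Polynomial.eval_mul, Polynomial.eval_C, Polynomial.eval_pow, Polynomial.eval_X, mul_pow]
    ring
  have hsetEq : {k : ℂ | ∑ m ∈ Finset.range n,
      (iteratedDeriv (n - 1 - m) g w / (Nat.factorial (n - 1 - m))) *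
        (Complex.I * k) ^ m / (Nat.factorial m) = 0} = {x : ℂ | P.IsRoot x} := by
    ext k
    simp only [Set.mem_setOf_eq, Polynomial.IsRoot, hsum k]
  have hcoeff : P.coeff (n - 1)
      = g w * Complex.I ^ (n - 1) / ((Nat.factorial (n - 1) : ℕ) : ℂ) := by
    rw [hP, Polynomial.finset_sum_coeff]
    rw [Finset.sum_eq_single (n - 1)]
    · simp [Polynomial.coeff_C_mul, Polynomial.coeff_X_pow, Nat.sub_self]
    · intro m hm hne
      simp [Polynomial.coeff_C_mul, Polynomial.coeff_X_pow, Ne.symm hne]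
    · intro h
      exact absurd (Finset.mem_range.2 (by omega)) h
  have hP0 : P ≠ 0 := by
    intro h
    rw [h, Polynomial.coeff_zero] at hcoeff
    exact hlead hcoeff.symm
  have hdeg : P.natDegree ≤ n - 1 := by
    rw [hP]
    apply Polynomial.natDegree_sum_le_of_forall_le
    intro m hm
    refine le_trans (Polynomial.natDegree_C_mul_le _ _) ?_
    rw [Polynomial.natDegree_X_pow]
    have := Finset.mem_range.1 hm
    omega
  refine ⟨?_, hlead, ?_, ?_⟩
  · intro k
    filter_upwards [Ioo_mem_nhdsGT_of_mem (Set.left_mem_Ico.2 hr0)] with ε hε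
    exact aux_residue hn hU hwU hg hfg k hrU hε
  · rw [hsetEq]
    exact Polynomial.finite_setOf_isRoot hP0
  · rw [hsetEq]
    have hsub : {x : ℂ | P.IsRoot x} = ↑P.roots.toFinset := by
      ext x
      simp [Multiset.mem_toFinset, Polynomial.mem_roots hP0]
    rw [hsub, Set.ncard_coe_finset]
    exact le_trans (Multiset.toFinset_card_le _) (le_trans (Polynomial.card_roots' P) hdeg)
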